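/- Optimality under the direct parametrization (sufficiency of condition C4, Theorem 2a): for a finite MDP, if Σ_{t=0}^∞ η_t d_t(s) = ∞ for every state s, then under direct-parametrization policy updates with exact value functions, lim_{t→∞} q_t(s,a) = q_⋆(s,a) and lim_{t→∞} v_t(s) = v_⋆(s) for all states s and actions a. -/

import Mathlib

open Finset Filter

section helpers

lemma min_comparison {S : Type*} [Fintype S] [Nonempty S] {γ : ℝ} (hγ0 : 0 ≤ γ) (hγ1 : γ < 1)
    (P : S → S → ℝ) (hP : ∀ s s', 0 ≤ P s s') (hP1 : ∀ s, ∑ s', P s s' = 1)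
    (u : S → ℝ) (hu : ∀ s, γ * ∑ s', P s s' * u s' ≤ u s) : ∀ s, 0 ≤ u s := by
  obtain ⟨s₀, -, hmin⟩ := Finset.exists_min_image Finset.univ u univ_nonempty
  have h1 : γ * u s₀ ≤ u s₀ := by
    calc γ * u s₀ = γ * ∑ s', P s₀ s' * u s₀ := by
          rw [← Finset.sum_mul, hP1, one_mul]
      _ ≤ γ * ∑ s', P s₀ s' * u s' := by
          apply mul_le_mul_of_nonneg_left _ hγ0
          exact Finset.sum_le_sum fun s' _ => mul_le_mul_of_nonneg_left (hmin s' (mem_univ _)) (hP _ _)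
      _ ≤ u s₀ := hu s₀
  have h0 : 0 ≤ u s₀ := by nlinarith
  exact fun s => h0.trans (hmin s (mem_univ _))

lemma value_le_of_bellman_ge {S A : Type*} [Fintype S] [Nonempty S] [Fintype A] [Nonempty A]
    (p : S → A → S → ℝ) (hp : ∀ s a s', 0 ≤ p s a s')
    (hpsum : ∀ s a, ∑ s', p s a s' = 1)
    (r : S → A → ℝ) {γ : ℝ} (hγ0 : 0 ≤ γ) (hγ1 : γ < 1)
    (L : S → ℝ) (hL : ∀ s a, r s a + γ * ∑ s', p s a s' * L s' ≤ L s)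
    (π' : S → A → ℝ) (hπ'nn : ∀ s a, 0 ≤ π' s a) (hπ'1 : ∀ s, ∑ a, π' s a = 1)
    (w : S → ℝ) (hw : ∀ s, w s = ∑ a, π' s a * (r s a + γ * ∑ s', p s a s' * w s')) :
    ∀ s, w s ≤ L s := by
  set P : S → S → ℝ := fun s s' => ∑ a, π' s a * p s a s' with hPdef
  have hPnn : ∀ s s', 0 ≤ P s s' := fun s s' =>
    Finset.sum_nonneg fun a _ => mul_nonneg (hπ'nn s a) (hp s a s')
  have hP1 : ∀ s, ∑ s', P s s' = 1 := by
    intro s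
    rw [show ∑ s', P s s' = ∑ a, ∑ s', π' s a * p s a s' from Finset.sum_comm]
    calc ∑ a, ∑ s', π' s a * p s a s' = ∑ a, π' s a * ∑ s', p s a s' := by
          simp [Finset.mul_sum]
      _ = 1 := by simp [hpsum, hπ'1 s]
  have key : ∀ s, γ * ∑ s', P s s' * (L s' - w s') ≤ L s - w s := by
    intro s
    have swap : γ * ∑ s', P s s' * (L s' - w s')
        = ∑ a, π' s a * (γ * ∑ s', p s a s' * (L s' - w s')) := by
      simp only [hPdef, Finset.sum_mul, Finset.mul_sum]
      rw [Finset.sum_comm]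
      exact Finset.sum_congr rfl fun a _ => Finset.sum_congr rfl fun s' _ => by ring
    have h1 : ∑ a, π' s a * (r s a + γ * ∑ s', p s a s' * L s') ≤ L s := by
      calc ∑ a, π' s a * (r s a + γ * ∑ s', p s a s' * L s')
          ≤ ∑ a, π' s a * L s :=
            Finset.sum_le_sum fun a _ => mul_le_mul_of_nonneg_left (hL s a) (hπ'nn s a)
        _ = L s := by rw [← Finset.sum_mul, hπ'1 s, one_mul]
    have h2 : γ * ∑ s', P s s' * (L s' - w s')
        = ∑ a, π' s a * (r s a + γ * ∑ s', p s a s' * L s') - w s := by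
      rw [swap, hw s, ← Finset.sum_sub_distrib]
      refine Finset.sum_congr rfl fun a _ => ?_
      have : ∑ s', p s a s' * (L s' - w s')
          = (∑ s', p s a s' * L s') - ∑ s', p s a s' * w s' := by
        rw [← Finset.sum_sub_distrib]
        exact Finset.sum_congr rfl fun s' _ => by ring
      rw [this]; ring
    linarith
  intro s
  have := min_comparison hγ0 hγ1 P hPnn hP1 (fun s => L s - w s) key s
  linarith

lemma improvement_step {S A : Type*} [Fintype S] [Nonempty S] [Fintype A] [Nonempty A]
    (p : S → A → S → ℝ) (hp : ∀ s a s', 0 ≤ p s a s')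
    (hpsum : ∀ s a, ∑ s', p s a s' = 1)
    (r : S → A → ℝ) {γ : ℝ} (hγ0 : 0 ≤ γ) (hγ1 : γ < 1)
    (π₁ π₂ : S → A → ℝ) (hπ₂nn : ∀ s a, 0 ≤ π₂ s a) (hπ₂1 : ∀ s, ∑ a, π₂ s a = 1)
    (v₁ v₂ : S → ℝ)
    (hv₁ : ∀ s, v₁ s = ∑ a, π₁ s a * (r s a + γ * ∑ s', p s a s' * v₁ s'))
    (hv₂ : ∀ s, v₂ s = ∑ a, π₂ s a * (r s a + γ * ∑ s', p s a s' * v₂ s'))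
    (hg : ∀ s, 0 ≤ ∑ a, (π₂ s a - π₁ s a) * (r s a + γ * ∑ s', p s a s' * v₁ s')) :
    ∀ s, v₁ s + ∑ a, (π₂ s a - π₁ s a) * (r s a + γ * ∑ s', p s a s' * v₁ s') ≤ v₂ s := by
  set g : S → ℝ := fun s => ∑ a, (π₂ s a - π₁ s a) * (r s a + γ * ∑ s', p s a s' * v₁ s')
    with hgdef
  set P : S → S → ℝ := fun s s' => ∑ a, π₂ s a * p s a s' with hPdef
  have hPnn : ∀ s s', 0 ≤ P s s' := fun s s' =>
    Finset.sum_nonneg fun a _ => mul_nonneg (hπ₂nn s a) (hp s a s')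
  have hP1 : ∀ s, ∑ s', P s s' = 1 := by
    intro s
    rw [show ∑ s', P s s' = ∑ a, ∑ s', π₂ s a * p s a s' from Finset.sum_comm]
    calc ∑ a, ∑ s', π₂ s a * p s a s' = ∑ a, π₂ s a * ∑ s', p s a s' := by
          simp [Finset.mul_sum]
      _ = 1 := by simp [hpsum, hπ₂1 s]
  have key : ∀ s, v₂ s - v₁ s = g s + γ * ∑ s', P s s' * (v₂ s' - v₁ s') := by
    intro s
    have swap : γ * ∑ s', P s s' * (v₂ s' - v₁ s')
        = ∑ a, π₂ s a * (γ * ∑ s', p s a s' * (v₂ s' - v₁ s')) := by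
      simp only [hPdef, Finset.sum_mul, Finset.mul_sum]
      rw [Finset.sum_comm]
      exact Finset.sum_congr rfl fun a _ => Finset.sum_congr rfl fun s' _ => by ring
    rw [swap, hgdef, hv₁ s, hv₂ s, ← Finset.sum_sub_distrib, ← Finset.sum_add_distrib]
    refine Finset.sum_congr rfl fun a _ => ?_
    have hsub : ∑ s', p s a s' * (v₂ s' - v₁ s')
        = (∑ s', p s a s' * v₂ s') - ∑ s', p s a s' * v₁ s' := by
      rw [← Finset.sum_sub_distrib]
      exact Finset.sum_congr rfl fun s' _ => by ring
    rw [hsub]; ring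
  have hu : ∀ s, γ * ∑ s', P s s' * (v₂ s' - v₁ s') ≤ v₂ s - v₁ s := by
    intro s; rw [key s]; linarith [hg s]
  have hnn := min_comparison hγ0 hγ1 P hPnn hP1 (fun s => v₂ s - v₁ s) hu
  intro s
  have hsum_nn : 0 ≤ ∑ s', P s s' * (v₂ s' - v₁ s') :=
    Finset.sum_nonneg fun s' _ => mul_nonneg (hPnn s s') (hnn s')
  have := key s
  nlinarith

lemma proj_lower {A : Type*} [Fintype A] (x z qv : A → ℝ) (c : ℝ)
    (h : ∑ a, (z a - (x a + c * qv a)) ^ 2 ≤ ∑ a, (x a - (x a + c * qv a)) ^ 2) :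
    ∑ a, (z a - x a) ^ 2 ≤ 2 * c * ∑ a, (z a - x a) * qv a := by
  have key : ∑ a, ((z a - (x a + c * qv a)) ^ 2 - (x a - (x a + c * qv a)) ^ 2)
      = ∑ a, ((z a - x a) ^ 2 - 2 * c * ((z a - x a) * qv a)) :=
    Finset.sum_congr rfl fun a _ => by ring
  rw [Finset.sum_sub_distrib, Finset.sum_sub_distrib] at key
  have h2 : ∑ a, 2 * c * ((z a - x a) * qv a) = 2 * c * ∑ a, (z a - x a) * qv a :=
    (Finset.mul_sum _ _ _).symm
  linarith [key, h, h2]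

lemma proj_vi {A : Type*} [Fintype A] (y z : A → ℝ)
    (hznn : ∀ a, 0 ≤ z a) (hz1 : ∑ a, z a = 1)
    (hmin : ∀ w : A → ℝ, (∀ a, 0 ≤ w a) → ∑ a, w a = 1 →
      ∑ a, (z a - y a) ^ 2 ≤ ∑ a, (w a - y a) ^ 2)
    (w : A → ℝ) (hwnn : ∀ a, 0 ≤ w a) (hw1 : ∑ a, w a = 1) :
    0 ≤ ∑ a, (z a - y a) * (w a - z a) := by
  set B : ℝ := ∑ a, (w a - z a) ^ 2 with hB
  set Ac : ℝ := ∑ a, (z a - y a) * (w a - z a) with hA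
  have hBnn : 0 ≤ B := Finset.sum_nonneg fun a _ => sq_nonneg _
  have hlam : ∀ l : ℝ, 0 < l → l ≤ 1 → 0 ≤ 2 * Ac + l * B := by
    intro l hl0 hl1
    have hwl := hmin (fun a => z a + l * (w a - z a))
      (fun a => by
        nlinarith [mul_nonneg (by linarith : (0:ℝ) ≤ 1 - l) (hznn a),
          mul_nonneg hl0.le (hwnn a)])
      (by
        have hls : ∑ x, l * (w x - z x) = l * (∑ a, w a - ∑ a, z a) := by
          rw [← Finset.sum_sub_distrib, Finset.mul_sum]
        rw [Finset.sum_add_distrib, hls, hz1, hw1]; ring)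
    have expand : ∑ a, (z a + l * (w a - z a) - y a) ^ 2
        = ∑ a, (z a - y a) ^ 2 + l * (2 * Ac + l * B) := by
      have hexp : ∑ a, (z a + l * (w a - z a) - y a) ^ 2
          = ∑ a, ((z a - y a) ^ 2 + (2 * l) * ((z a - y a) * (w a - z a)) + l ^ 2 * (w a - z a) ^ 2) :=
        Finset.sum_congr rfl fun a _ => by ring
      rw [hexp, Finset.sum_add_distrib, Finset.sum_add_distrib, ← Finset.mul_sum, ← Finset.mul_sum]
      rw [← hA, ← hB]; ring
    rw [expand] at hwl
    nlinarith
  by_contra hneg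
  push_neg at hneg
  rcases eq_or_lt_of_le hBnn with hB0 | hBpos
  · have := hlam 1 one_pos le_rfl
    rw [← hB0] at this; linarith
  · have hlpos : 0 < min 1 (-Ac / B) := lt_min one_pos (div_pos (by linarith) hBpos)
    have := hlam _ hlpos (min_le_left _ _)
    have hle : min 1 (-Ac / B) * B ≤ (-Ac / B) * B :=
      mul_le_mul_of_nonneg_right (min_le_right _ _) hBnn
    rw [div_mul_cancel₀ _ (ne_of_gt hBpos)] at hle
    linarith

lemma proj_gap {A : Type*} [Fintype A] [DecidableEq A] (x z qv : A → ℝ) (c : ℝ)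
    (hznn : ∀ a, 0 ≤ z a) (hz1 : ∑ a, z a = 1)
    (hmin : ∀ w : A → ℝ, (∀ a, 0 ≤ w a) → ∑ a, w a = 1 →
      ∑ a, (z a - (x a + c * qv a)) ^ 2 ≤ ∑ a, (w a - (x a + c * qv a)) ^ 2)
    (a₀ : A) :
    c * (qv a₀ - ∑ a, z a * qv a) ≤ ∑ a, |z a - x a| := by
  set w : A → ℝ := fun a => if a = a₀ then 1 else 0 with hwdef
  have hwnn : ∀ a, 0 ≤ w a := fun a => by simp only [hwdef]; split <;> norm_num
  have hw1 : ∑ a, w a = 1 := by simp [hwdef]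
  have hvi := proj_vi (fun a => x a + c * qv a) z hznn hz1 hmin w hwnn hw1
  have hsplit : ∑ a, (z a - (x a + c * qv a)) * (w a - z a)
      = ∑ a, (z a - x a) * (w a - z a) - c * ∑ a, qv a * (w a - z a) := by
    rw [Finset.mul_sum, ← Finset.sum_sub_distrib]
    exact Finset.sum_congr rfl fun a _ => by ring
  have hqw : ∑ a, qv a * (w a - z a) = qv a₀ - ∑ a, z a * qv a := by
    have : ∑ a, qv a * (w a - z a) = ∑ a, (qv a * w a - z a * qv a) :=
      Finset.sum_congr rfl fun a _ => by ring
    rw [this, Finset.sum_sub_distrib]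
    congr 1
    simp [hwdef, mul_ite]
  have hbound : ∑ a, (z a - x a) * (w a - z a) ≤ ∑ a, |z a - x a| := by
    apply Finset.sum_le_sum
    intro a _
    have hz_le : z a ≤ 1 := hz1 ▸ Finset.single_le_sum (fun i _ => hznn i) (mem_univ a)
    have habs : |w a - z a| ≤ 1 := by
      rw [abs_le]; simp only [hwdef]
      split <;> constructor <;> linarith [hznn a, hz_le]
    calc (z a - x a) * (w a - z a) ≤ |(z a - x a) * (w a - z a)| := le_abs_self _
      _ = |z a - x a| * |w a - z a| := abs_mul _ _
      _ ≤ |z a - x a| * 1 := mul_le_mul_of_nonneg_left habs (abs_nonneg _)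
      _ = |z a - x a| := mul_one _
  rw [hsplit, hqw] at hvi
  linarith

end helpers

/-- A stationary stochastic policy on a finite MDP. -/
def IsPolicy {S A : Type*} [Fintype A] (π : S → A → ℝ) : Prop :=
  (∀ s a, 0 ≤ π s a) ∧ ∀ s, ∑ a, π s a = 1

/-- `v` is the state value function of policy `π` (Bellman equation). -/
def IsValueOf {S A : Type*} [Fintype S] [Fintype A]
    (p : S → A → S → ℝ) (r : S → A → ℝ) (γ : ℝ)
    (π : S → A → ℝ) (v : S → ℝ) : Prop :=
  ∀ s, v s = ∑ a, π s a * (r s a + γ * ∑ s', p s a s' * v s')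

/-- **Optimality under the direct parametrization** (Theorem 2a): if
`Σ_t η_t d_t(s) = ∞` in every state `s` (condition C4), then under
direct-parametrization policy updates with exact value functions,
`q_t → q⋆` and `v_t → v⋆`. -/
theorem optimality_direct
    {S A : Type*} [Fintype S] [Nonempty S] [Fintype A] [Nonempty A]
    (p : S → A → S → ℝ) (hp : ∀ s a s', 0 ≤ p s a s')
    (hpsum : ∀ s a, ∑ s', p s a s' = 1)
    (r : S → A → ℝ) (γ : ℝ) (hγ0 : 0 ≤ γ) (hγ1 : γ < 1)
    (η : ℕ → ℝ) (hη : ∀ t, 0 < η t)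
    (d : ℕ → S → ℝ) (hd : ∀ t s, 0 < d t s)
    (π : ℕ → S → A → ℝ) (hπ : ∀ t, IsPolicy (π t))
    (v : ℕ → S → ℝ) (hv : ∀ t, IsValueOf p r γ (π t) (v t))
    (q : ℕ → S → A → ℝ)
    (hq : ∀ t s a, q t s a = r s a + γ * ∑ s', p s a s' * v t s')
    -- `π (t+1) (·|s)` is the Euclidean projection of
    -- `π t (·|s) + η t * d t s * q t (s, ·)` onto the simplex:
    (hproj : ∀ t s, ∀ w : A → ℝ, (∀ a, 0 ≤ w a) → ∑ a, w a = 1 →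
        ∑ a, (π (t + 1) s a - (π t s a + η t * d t s * q t s a)) ^ 2
          ≤ ∑ a, (w a - (π t s a + η t * d t s * q t s a)) ^ 2)
    -- condition C4:
    (hC4 : ∀ s, Tendsto (fun T => ∑ t ∈ Finset.range T, η t * d t s) atTop atTop)
    -- optimal values `v⋆(s) = max_π v_π(s)` and `q⋆(s,a) = max_π q_π(s,a)`:
    (vstar : S → ℝ)
    (hvstar : ∀ s, IsGreatest {x : ℝ | ∃ (π' : S → A → ℝ) (w : S → ℝ),
        IsPolicy π' ∧ IsValueOf p r γ π' w ∧ w s = x} (vstar s))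
    (qstar : S → A → ℝ)
    (hqstar : ∀ s a, IsGreatest {x : ℝ | ∃ (π' : S → A → ℝ) (w : S → ℝ),
        IsPolicy π' ∧ IsValueOf p r γ π' w ∧
        r s a + γ * ∑ s', p s a s' * w s' = x} (qstar s a)) :
    (∀ s a, Tendsto (fun t => q t s a) atTop (nhds (qstar s a))) ∧
    (∀ s, Tendsto (fun t => v t s) atTop (nhds (vstar s))) := by
  classical
  -- basic notation
  have hπnn : ∀ t s a, 0 ≤ π t s a := fun t => (hπ t).1
  have hπ1 : ∀ t s, ∑ a, π t s a = 1 := fun t => (hπ t).2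
  -- value as average of q
  have hvq : ∀ t s, v t s = ∑ a, π t s a * q t s a := by
    intro t s
    rw [(hv t) s]
    exact Finset.sum_congr rfl fun a _ => by rw [hq t s a]
  -- improvement quantity
  set G : ℕ → S → ℝ := fun t s => ∑ a, (π (t + 1) s a - π t s a) * q t s a with hGdef
  have hGeq : ∀ t s, G t s
      = ∑ a, (π (t + 1) s a - π t s a) * (r s a + γ * ∑ s', p s a s' * v t s') := by
    intro t s
    exact Finset.sum_congr rfl fun a _ => by rw [hq t s a]
  have hGlow : ∀ t s, ∑ a, (π (t + 1) s a - π t s a) ^ 2 ≤ 2 * (η t * d t s) * G t s := by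
    intro t s
    exact proj_lower (π t s) (π (t + 1) s) (q t s) (η t * d t s)
      (hproj t s (π t s) (hπnn t s) (hπ1 t s))
  have hc : ∀ t s, 0 < η t * d t s := fun t s => mul_pos (hη t) (hd t s)
  have hGnn : ∀ t s, 0 ≤ G t s := by
    intro t s
    have h1 : (0:ℝ) ≤ ∑ a, (π (t + 1) s a - π t s a) ^ 2 :=
      Finset.sum_nonneg fun a _ => sq_nonneg _
    nlinarith [hGlow t s, hc t s]
  have hstep : ∀ t s, v t s + G t s ≤ v (t + 1) s := by
    intro t s
    rw [hGeq t s]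
    exact improvement_step p hp hpsum r hγ0 hγ1 (π t) (π (t + 1))
      (hπnn (t + 1)) (hπ1 (t + 1)) (v t) (v (t + 1)) (hv t) (hv (t + 1))
      (fun s => (hGeq t s) ▸ hGnn t s) s
  have hmono : ∀ s, Monotone fun t => v t s := by
    intro s
    apply monotone_nat_of_le_succ
    intro t
    have := hstep t s
    have := hGnn t s
    linarith
  have hub : ∀ t s, v t s ≤ vstar s := fun t s =>
    (hvstar s).2 ⟨π t, v t, hπ t, hv t, rfl⟩
  set L : S → ℝ := fun s => ⨆ t, v t s with hLdef
  have hbdd : ∀ s, BddAbove (Set.range fun t => v t s) := by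
    intro s
    exact ⟨vstar s, by rintro x ⟨t, rfl⟩; exact hub t s⟩
  have hvL : ∀ s, Tendsto (fun t => v t s) atTop (nhds (L s)) := fun s =>
    tendsto_atTop_ciSup (hmono s) (hbdd s)
  have hvleL : ∀ t s, v t s ≤ L s := fun t s => le_ciSup (hbdd s) t
  set Q : S → A → ℝ := fun s a => r s a + γ * ∑ s', p s a s' * L s' with hQdef
  have hqQ : ∀ s a, Tendsto (fun t => q t s a) atTop (nhds (Q s a)) := by
    intro s a
    have h1 : Tendsto (fun t => r s a + γ * ∑ s', p s a s' * v t s') atTop (nhds (Q s a)) :=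
      tendsto_const_nhds.add (tendsto_const_nhds.mul
        (tendsto_finset_sum _ fun s' _ => tendsto_const_nhds.mul (hvL s')))
    simpa only [← hq] using h1
  -- telescoping bound
  have htel : ∀ s T, v 0 s + ∑ t ∈ Finset.range T, G t s ≤ v T s := by
    intro s T
    induction T with
    | zero => simp
    | succ T ih =>
      rw [Finset.sum_range_succ]
      have := hstep T s
      linarith
  -- THE KEY CLAIM
  have hQL : ∀ s a, Q s a ≤ L s := by
    intro s a
    apply le_of_forall_pos_le_add
    intro ε hε
    obtain ⟨T₀, hT₀⟩ := eventually_atTop.mp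
      ((hqQ s a).eventually (eventually_gt_nhds (show Q s a - ε / 2 < Q s a by linarith)))
    set cA : ℝ := (Fintype.card A : ℝ) with hcA
    have hcApos : 0 < cA := by
      rw [hcA]; exact_mod_cast Fintype.card_pos
    set D : ℕ → ℝ := fun t => ∑ a', |π (t + 1) s a' - π t s a'| with hDdef
    have hDnn : ∀ t, 0 ≤ D t := fun t => Finset.sum_nonneg fun a' _ => abs_nonneg _
    have hD2 : ∀ t, D t ^ 2 ≤ cA * ∑ a', (π (t + 1) s a' - π t s a') ^ 2 := by
      intro t
      have h := sq_sum_le_card_mul_sum_sq (s := (Finset.univ : Finset A))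
        (f := fun a' => |π (t + 1) s a' - π t s a'|)
      simpa [sq_abs, hcA, hDdef] using h
    have hgap : ∀ t, (η t * d t s) * (q t s a - ∑ a', π (t + 1) s a' * q t s a') ≤ D t := by
      intro t
      exact proj_gap (π t s) (π (t + 1) s) (q t s) (η t * d t s)
        (hπnn (t + 1) s) (hπ1 (t + 1) s) (hproj t s) a
    have heqG : ∀ t, ∑ a', π (t + 1) s a' * q t s a' = v t s + G t s := by
      intro t
      rw [hvq t s]
      simp only [hGdef]
      rw [← Finset.sum_add_distrib]
      exact Finset.sum_congr rfl fun a' _ => by ring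
    have hzq : ∀ t, ∑ a', π (t + 1) s a' * q t s a' ≤ v (t + 1) s := by
      intro t
      rw [heqG t]
      exact hstep t s
    have hex : ∃ t, T₀ ≤ t ∧ D t ≤ ε / 2 * (η t * d t s) := by
      by_contra hno
      push_neg at hno
      have hGc : ∀ t, T₀ ≤ t → ε ^ 2 * (η t * d t s) ≤ 8 * cA * G t s := by
        intro t ht
        have h1 := hno t ht
        have h2 := hD2 t
        have h3 := hGlow t s
        have h4 := hc t s
        have hq1 : (ε / 2 * (η t * d t s)) ^ 2 < D t ^ 2 := by
          have hnn : 0 ≤ ε / 2 * (η t * d t s) := by positivity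
          nlinarith
        have h5 := mul_le_mul_of_nonneg_left h3 hcApos.le
        nlinarith [mul_pos h4 h4, sq_nonneg ε, hGnn t s]
      -- telescoping over `Ico T₀ T`
      have htelIco : ∀ T, T₀ ≤ T → v T₀ s + ∑ t ∈ Finset.Ico T₀ T, G t s ≤ v T s := by
        intro T hT
        induction T, hT using Nat.le_induction with
        | base => simp
        | succ T hT ih =>
          rw [Finset.sum_Ico_succ_top hT]
          have := hstep T s
          linarith
      set M : ℝ := ∑ t ∈ Finset.range T₀, η t * d t s
        + 8 * cA / ε ^ 2 * (vstar s - v 0 s) with hM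
      obtain ⟨T, hT1, hT2⟩ : ∃ T, T₀ ≤ T ∧ M < ∑ t ∈ Finset.range T, η t * d t s := by
        obtain ⟨T, hT⟩ := eventually_atTop.mp
          (((hC4 s).eventually_gt_atTop M).and (eventually_ge_atTop T₀))
        exact ⟨T, (hT T le_rfl).2, (hT T le_rfl).1⟩
      -- split the sum
      have hsplit : ∑ t ∈ Finset.range T, η t * d t s
          = ∑ t ∈ Finset.range T₀, η t * d t s + ∑ t ∈ Finset.Ico T₀ T, η t * d t s := by
        rw [Finset.range_eq_Ico, Finset.range_eq_Ico]
        exact (Finset.sum_Ico_consecutive (fun t => η t * d t s) (Nat.zero_le T₀) hT1).symm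
      have hIcoG : ∑ t ∈ Finset.Ico T₀ T, G t s ≤ vstar s - v 0 s := by
        have h1 := htelIco T hT1
        have h2 := hub T s
        have h3 : v 0 s ≤ v T₀ s := hmono s (Nat.zero_le T₀)
        linarith
      have hIcoc : ε ^ 2 * ∑ t ∈ Finset.Ico T₀ T, η t * d t s
          ≤ 8 * cA * (vstar s - v 0 s) := by
        calc ε ^ 2 * ∑ t ∈ Finset.Ico T₀ T, η t * d t s
            = ∑ t ∈ Finset.Ico T₀ T, ε ^ 2 * (η t * d t s) := Finset.mul_sum _ _ _
          _ ≤ ∑ t ∈ Finset.Ico T₀ T, 8 * cA * G t s :=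
              Finset.sum_le_sum fun t hti => hGc t (Finset.mem_Ico.mp hti).1
          _ = 8 * cA * ∑ t ∈ Finset.Ico T₀ T, G t s := (Finset.mul_sum _ _ _).symm
          _ ≤ 8 * cA * (vstar s - v 0 s) :=
              mul_le_mul_of_nonneg_left hIcoG (by positivity)
      have hε2 : (0:ℝ) < ε ^ 2 := by positivity
      have hMc : ε ^ 2 * (8 * cA / ε ^ 2 * (vstar s - v 0 s))
          = 8 * cA * (vstar s - v 0 s) := by field_simp
      have hfin : ∑ t ∈ Finset.Ico T₀ T, η t * d t s
          ≤ 8 * cA / ε ^ 2 * (vstar s - v 0 s) :=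
        (mul_le_mul_iff_of_pos_left hε2).mp (by linarith)
      rw [hsplit] at hT2
      rw [hM] at hT2
      linarith
    obtain ⟨t, htT₀, htD⟩ := hex
    have h1 : Q s a - ε / 2 < q t s a := hT₀ t htT₀
    have h2 : q t s a ≤ ∑ a', π (t + 1) s a' * q t s a' + ε / 2 := by
      have hg := hgap t
      have hcpos := hc t s
      nlinarith
    have h3 := hzq t
    have h4 := hvleL (t + 1) s
    have hx1 : q t s a ≤ v (t + 1) s + ε / 2 := by linarith [h2, h3]
    have hx2 : q t s a ≤ L s + ε / 2 := by linarith [hx1, h4]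
    have hx3 : Q s a < q t s a + ε / 2 := by linarith [h1]
    have hfinal : Q s a ≤ L s + ε := le_of_lt (lt_of_lt_of_le hx3 (by linarith [hx2]))
    exact hfinal
  -- comparison with arbitrary policies
  have hcomp : ∀ (π' : S → A → ℝ) (w : S → ℝ), IsPolicy π' → IsValueOf p r γ π' w →
      ∀ s, w s ≤ L s := fun π' w hπ' hw' =>
    value_le_of_bellman_ge p hp hpsum r hγ0 hγ1 L (fun s a => hQL s a) π' hπ'.1 hπ'.2 w hw'
  have hLvstar : ∀ s, L s = vstar s := by
    intro s
    apply le_antisymm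
    · exact ciSup_le fun t => hub t s
    · obtain ⟨π', w, hπ', hw', hws⟩ := (hvstar s).1
      rw [← hws]
      exact hcomp π' w hπ' hw' s
  have hQqstar : ∀ s a, Q s a = qstar s a := by
    intro s a
    apply le_antisymm
    · exact le_of_tendsto (hqQ s a) (Eventually.of_forall fun t =>
        (hqstar s a).2 ⟨π t, v t, hπ t, hv t, (hq t s a).symm⟩)
    · obtain ⟨π', w, hπ', hw', hws⟩ := (hqstar s a).1
      rw [← hws, hQdef]
      have : ∑ s', p s a s' * w s' ≤ ∑ s', p s a s' * L s' :=
        Finset.sum_le_sum fun s' _ =>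
          mul_le_mul_of_nonneg_left (hcomp π' w hπ' hw' s') (hp s a s')
      dsimp only
      nlinarith
  constructor
  · intro s a
    rw [← hQqstar s a]
    exact hqQ s a
  · intro s
    rw [← hLvstar s]
    exact hvL s
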